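/- Conjugation gives a bijection between the partitions λ of n whose Durfee square has size d and which have no part equal to d, and the partitions μ of n with μ_d = μ_{d+1} = d (the d-th and (d+1)-st largest parts both equal d). In particular, for each fixed d ≥ 1 and n ≥ 1 these two sets of partitions of n are equinumerous. -/

import Mathlib

open Multiset

/-- The `d`-th largest part of a partition (1-indexed); `0` if the index is out of range. -/
def nthPart {n : ℕ} (p : n.Partition) (d : ℕ) : ℕ :=
  (p.parts.sort (· ≥ ·)).getD (d - 1) 0

/-- `f n d` is the number of partitions of `n` with fixed point `d`,
i.e. whose `d`-th largest part equals `d`. -/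
noncomputable def f (n d : ℕ) : ℕ :=
  Nat.card {p : n.Partition // nthPart p d = d}

/-- The size of the Durfee square of a partition: the greatest index `i` with `λ_i ≥ i`. -/
noncomputable def durfee {n : ℕ} (p : n.Partition) : ℕ :=
  sSup {i : ℕ | i ≤ nthPart p i}

/-- number of parts that are at least i -/
def cpart (s : Multiset ℕ) (i : ℕ) : ℕ := Multiset.card (s.filter (fun x => i ≤ x))

lemma cpart_eq_countP (s : Multiset ℕ) (i : ℕ) :
    cpart s i = Multiset.countP (fun x => i ≤ x) s :=
  (Multiset.countP_eq_card_filter _ _).symm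

lemma cpart_anti (s : Multiset ℕ) {i j : ℕ} (h : i ≤ j) : cpart s j ≤ cpart s i := by
  apply Multiset.card_le_card
  exact Multiset.monotone_filter_right s (fun x hx => le_trans h hx)

lemma cpart_succ (s : Multiset ℕ) (a : ℕ) :
    cpart s a = cpart s (a + 1) + Multiset.count a s := by
  simp only [cpart_eq_countP]
  induction s using Multiset.induction with
  | empty => simp
  | cons b s ih =>
    rw [Multiset.countP_cons, Multiset.countP_cons, Multiset.count_cons, ih]
    by_cases h1 : a ≤ b <;> by_cases h2 : a + 1 ≤ b <;> by_cases h3 : a = b <;>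
      simp [h1, h2, h3] <;> omega

lemma parts_le {n : ℕ} (q : n.Partition) {x : ℕ} (hx : x ∈ q.parts) : x ≤ n := by
  have := Multiset.single_le_sum (fun y _ => Nat.zero_le y) x hx
  rwa [q.parts_sum] at this

/-- key duality for sorted lists -/
lemma list_getD {k : ℕ} (hk : 1 ≤ k) : ∀ (L : List ℕ), L.Pairwise (· ≥ ·) → ∀ j : ℕ,
    (k ≤ L.getD j 0 ↔ j < (L.filter (fun x => k ≤ x)).length) := by
  intro L
  induction L with
  | nil => intro _ j; simp; omega
  | cons a t ih =>
    intro hs j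
    obtain ⟨ha, ht⟩ := List.pairwise_cons.mp hs
    cases j with
    | zero =>
      simp only [List.getD_cons_zero]
      by_cases h : k ≤ a
      · simp [List.filter_cons, h]
      · have : (a :: t).filter (fun x => decide (k ≤ x)) = [] := by
          rw [List.filter_eq_nil_iff]
          intro x hx
          rcases List.mem_cons.mp hx with rfl | hx
          · simpa using h
          · have := ha x hx; simp; omega
        simp [this, h]
    | succ j =>
      simp only [List.getD_cons_succ]
      rw [ih ht j]
      by_cases h : k ≤ a
      · simp [List.filter_cons, h]
      · have h2 : t.filter (fun x => decide (k ≤ x)) = [] := by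
          rw [List.filter_eq_nil_iff]
          intro x hx
          have := ha x hx; simp; omega
        have h3 : (a :: t).filter (fun x => decide (k ≤ x)) = [] := by
          rw [List.filter_cons]
          simp only [h, decide_eq_true_eq, if_neg]
          exact h2
        rw [h2, h3]
        simp
  
lemma nthPart_le_iff {n : ℕ} (q : n.Partition) {i k : ℕ} (hk : 1 ≤ k) (hi : 1 ≤ i) :
    k ≤ nthPart q i ↔ i ≤ cpart q.parts k := by
  have h1 := list_getD hk (q.parts.sort (· ≥ ·)) (Multiset.pairwise_sort _ _) (i - 1)
  unfold nthPart
  rw [h1]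
  have h2 : (q.parts.filter (fun x => k ≤ x)) =
      ((q.parts.sort (· ≥ ·)).filter (fun x => decide (k ≤ x)) : Multiset ℕ) := by
    conv_lhs => rw [← Multiset.sort_eq q.parts (· ≥ ·)]
    rfl
  unfold cpart
  rw [h2]
  simp only [Multiset.coe_card]
  omega

lemma nthPart_le {n : ℕ} (q : n.Partition) (i : ℕ) : nthPart q i ≤ n := by
  unfold nthPart
  set L := q.parts.sort (· ≥ ·) with hL
  by_cases h : i - 1 < L.length
  · rw [List.getD_eq_getElem L 0 h]
    apply parts_le q
    rw [← Multiset.sort_eq q.parts (· ≥ ·), ← hL]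
    exact_mod_cast List.getElem_mem h
  · rw [List.getD_eq_default L 0 (by omega)]
    exact Nat.zero_le n

lemma sum_cpart (n : ℕ) (s : Multiset ℕ) (hs : ∀ x ∈ s, x ≤ n) :
    ∑ i ∈ Finset.Icc 1 n, cpart s i = s.sum := by
  induction s using Multiset.induction with
  | empty => simp [cpart]
  | cons a s ih =>
    have ha : a ≤ n := hs a (Multiset.mem_cons_self a s)
    have hs' : ∀ x ∈ s, x ≤ n := fun x hx => hs x (Multiset.mem_cons_of_mem hx)
    have hsplit : ∀ i, cpart (a ::ₘ s) i = cpart s i + (if i ≤ a then 1 else 0) := by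
      intro i
      rw [cpart_eq_countP, cpart_eq_countP, Multiset.countP_cons]
    simp only [hsplit]
    rw [Finset.sum_add_distrib, ih hs', Multiset.sum_cons]
    have hcard : (∑ i ∈ Finset.Icc 1 n, if i ≤ a then 1 else 0) = a := by
      rw [← Finset.card_filter]
      have hf : (Finset.Icc 1 n).filter (fun i => i ≤ a) = Finset.Icc 1 a := by
        ext i; simp only [Finset.mem_Icc, Finset.mem_filter]; omega
      rw [hf, Nat.card_Icc]; omega
    omega

/-- conjugate partition -/
def conj {n : ℕ} (q : n.Partition) : n.Partition :=
  Nat.Partition.ofSums n (Multiset.map (fun i => cpart q.parts i) (Finset.Icc 1 n).val)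
    (by rw [← Finset.sum_eq_multiset_sum, sum_cpart n q.parts (fun x hx => parts_le q hx)]
        exact q.parts_sum)

lemma cpart_conj {n : ℕ} (q : n.Partition) {k : ℕ} (hk : 1 ≤ k) :
    cpart (conj q).parts k = ((Finset.Icc 1 n).filter (fun i => k ≤ cpart q.parts i)).card := by
  have h1 : (conj q).parts
      = (Multiset.map (fun i => cpart q.parts i) (Finset.Icc 1 n).val).filter (· ≠ 0) := by
    rfl
  rw [cpart_eq_countP, h1, Multiset.countP_filter]
  have h2 : ∀ x : ℕ, (k ≤ x ∧ x ≠ 0) ↔ k ≤ x := by intro x; omega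
  rw [Multiset.countP_congr rfl (fun x _ => by rw [h2]), Multiset.countP_map,
    Finset.card_def, Finset.filter_val]

lemma pivot {n : ℕ} (q : n.Partition) {i k : ℕ} (hi : 1 ≤ i) (hk : 1 ≤ k) :
    i ≤ cpart (conj q).parts k ↔ k ≤ cpart q.parts i := by
  rw [cpart_conj q hk]
  constructor
  · intro h
    by_contra hc
    push_neg at hc
    have hsub : (Finset.Icc 1 n).filter (fun j => k ≤ cpart q.parts j) ⊆ Finset.Ico 1 i := by
      intro j hj
      rw [Finset.mem_filter, Finset.mem_Icc] at hj
      rw [Finset.mem_Ico]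
      refine ⟨hj.1.1, ?_⟩
      by_contra hji
      push_neg at hji
      have := cpart_anti q.parts hji
      omega
    have := Finset.card_le_card hsub
    rw [Nat.card_Ico] at this
    omega
  · intro h
    have hin : i ≤ n := by
      have h1 : 1 ≤ cpart q.parts i := le_trans hk h
      rw [cpart] at h1
      obtain ⟨x, hx⟩ := Multiset.card_pos_iff_exists_mem.mp h1
      rw [Multiset.mem_filter] at hx
      exact le_trans hx.2 (parts_le q hx.1)
    have hsub : Finset.Icc 1 i ⊆ (Finset.Icc 1 n).filter (fun j => k ≤ cpart q.parts j) := by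
      intro j hj
      rw [Finset.mem_Icc] at hj
      rw [Finset.mem_filter, Finset.mem_Icc]
      exact ⟨⟨hj.1, le_trans hj.2 hin⟩, le_trans h (cpart_anti q.parts hj.2)⟩
    have := Finset.card_le_card hsub
    rw [Nat.card_Icc] at this
    omega

lemma nat_eq_of_le_iff {a b : ℕ} (h : ∀ i, 1 ≤ i → (i ≤ a ↔ i ≤ b)) : a = b := by
  rcases Nat.eq_zero_or_pos a with ha | ha <;> rcases Nat.eq_zero_or_pos b with hb | hb
  · omega
  · have := (h b hb).mpr le_rfl; omega
  · have := (h a ha).mp le_rfl; omega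
  · have h1 := (h a ha).mp le_rfl
    have h2 := (h b hb).mpr le_rfl
    omega

lemma nthPart_conj {n : ℕ} (q : n.Partition) {i : ℕ} (hi : 1 ≤ i) :
    nthPart (conj q) i = cpart q.parts i := by
  apply nat_eq_of_le_iff
  intro k hk
  rw [nthPart_le_iff (conj q) hk hi, pivot q hi hk]

lemma multiset_eq_of_cpart {s t : Multiset ℕ} (hs : 0 ∉ s) (ht : 0 ∉ t)
    (h : ∀ k, 1 ≤ k → cpart s k = cpart t k) : s = t := by
  ext a
  rcases Nat.eq_zero_or_pos a with rfl | ha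
  · rw [Multiset.count_eq_zero.mpr hs, Multiset.count_eq_zero.mpr ht]
  · have h1 := cpart_succ s a
    have h2 := cpart_succ t a
    have h3 := h a ha
    have h4 := h (a + 1) (by omega)
    omega

lemma conj_conj {n : ℕ} (q : n.Partition) : conj (conj q) = q := by
  apply Nat.Partition.ext
  apply multiset_eq_of_cpart
  · intro h; exact absurd ((conj (conj q)).parts_pos h) (lt_irrefl 0)
  · intro h; exact absurd (q.parts_pos h) (lt_irrefl 0)
  · intro k hk
    apply nat_eq_of_le_iff
    intro i hi
    rw [pivot (conj q) hi hk, pivot q hk hi]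

lemma count_eq_zero_of_cpart {n : ℕ} (q : n.Partition) {d : ℕ}
    (h : cpart q.parts d = cpart q.parts (d + 1)) : d ∉ q.parts := by
  rw [← Multiset.count_eq_zero]
  have := cpart_succ q.parts d
  omega

/-- Conjugation is a bijection between partitions `λ` of `n` whose Durfee square has
size `d` and which have no part equal to `d`, and partitions `μ` of `n` with
`μ_d = μ_{d+1} = d`.  The bijection `e` is conjugation: the `i`-th largest part of
`e λ` is the number of parts of `λ` that are at least `i`.  In particular the two
sets are equinumerous. -/
theorem conjugation_bijection (n d : ℕ) (hd : 1 ≤ d) (hn : 1 ≤ n) :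
    ∃ e : {l : n.Partition // durfee l = d ∧ d ∉ l.parts} ≃
        {m : n.Partition // nthPart m d = d ∧ nthPart m (d + 1) = d},
      ∀ l : {l : n.Partition // durfee l = d ∧ d ∉ l.parts}, ∀ i, 1 ≤ i →
        nthPart (e l).1 i = Multiset.card ((l.1.parts).filter (fun x => i ≤ x)) := by
  -- basic facts about the Durfee set
  have hbdd : ∀ q : n.Partition, BddAbove {i : ℕ | i ≤ nthPart q i} :=
    fun q => ⟨n, fun i hi => le_trans hi (nthPart_le q i)⟩
  have hne : ∀ q : n.Partition, {i : ℕ | i ≤ nthPart q i}.Nonempty :=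
    fun q => ⟨0, Nat.zero_le _⟩
  -- forward direction
  have fwd : ∀ l : n.Partition, durfee l = d → d ∉ l.parts →
      nthPart (conj l) d = d ∧ nthPart (conj l) (d + 1) = d := by
    intro l hdur hnd
    have hmem : d ∈ {i : ℕ | i ≤ nthPart l i} := by
      rw [← hdur]; exact Nat.sSup_mem (hne l) (hbdd l)
    have h1 : d ≤ cpart l.parts d := (nthPart_le_iff l hd hd).mp hmem
    have hnotmem : ¬ (d + 1 ≤ nthPart l (d + 1)) := by
      intro hc
      have h5 : d + 1 ≤ durfee l :=
        le_csSup (hbdd l) (hc : d + 1 ∈ {i : ℕ | i ≤ nthPart l i})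
      omega
    have h2 : cpart l.parts (d + 1) ≤ d := by
      by_contra hc
      exact hnotmem ((nthPart_le_iff l (by omega) (by omega)).mpr (by omega))
    have h3 : cpart l.parts d = cpart l.parts (d + 1) := by
      have := cpart_succ l.parts d
      rw [← Multiset.count_eq_zero] at hnd
      omega
    have h4 : cpart l.parts d = d := by omega
    rw [nthPart_conj l hd, nthPart_conj l (by omega : 1 ≤ d + 1)]
    omega
  -- backward direction
  have bwd : ∀ m : n.Partition, nthPart m d = d → nthPart m (d + 1) = d →
      durfee (conj m) = d ∧ d ∉ (conj m).parts := by
    intro m h1 h2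
    have key1 : ∀ i, 1 ≤ i → (d ≤ cpart m.parts i ↔ i ≤ d) := by
      intro i hi
      rw [← nthPart_le_iff m hi hd, h1]
    have key2 : ∀ i, 1 ≤ i → (d + 1 ≤ cpart m.parts i ↔ i ≤ d) := by
      intro i hi
      rw [← nthPart_le_iff m hi (by omega : 1 ≤ d + 1), h2]
    constructor
    · unfold durfee
      apply le_antisymm
      · apply csSup_le (hne (conj m))
        intro i hi
        rcases Nat.eq_zero_or_pos i with rfl | hipos
        · omega
        · rw [Set.mem_setOf_eq, nthPart_conj m hipos] at hi
          by_contra hc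
          push_neg at hc
          have := (key2 i hipos).mp (by omega)
          omega
      · apply le_csSup (hbdd (conj m))
        rw [Set.mem_setOf_eq, nthPart_conj m hd]
        exact (key1 d hd).mpr le_rfl
    · apply count_eq_zero_of_cpart
      apply nat_eq_of_le_iff
      intro i hi
      rw [pivot m hi hd, pivot m hi (by omega : 1 ≤ d + 1), key1 i hi, key2 i hi]
  refine ⟨⟨fun l => ⟨conj l.1, fwd l.1 l.2.1 l.2.2⟩,
          fun m => ⟨conj m.1, bwd m.1 m.2.1 m.2.2⟩, ?_, ?_⟩, ?_⟩
  · intro l; exact Subtype.ext (conj_conj l.1)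
  · intro m; exact Subtype.ext (conj_conj m.1)
  · intro l i hi
    exact nthPart_conj l.1 hi
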